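/- If X_1, ..., X_n are nonnegative random variables with a common continuous distribution function F, and t(n,s) > 0 satisfies n·∫_0^{t(n,s)} x dF(x) = s, then E[max{|A| : A ⊆ [n], ∑_{i∈A} X_i ≤ s}] ≤ n·F(t(n,s)). -/

import Mathlib

open MeasureTheory ProbabilityTheory Set

/-- The Bruss-Robertson maximal function: the largest cardinality of a subset of
indices whose sum of values is at most `s`. -/
noncomputable def knapMax {n : ℕ} (x : Fin n → ℝ) (s : ℝ) : ℕ :=
  (Finset.univ.powerset.filter (fun A => ∑ i ∈ A, x i ≤ s)).sup Finset.card

/-- The key pointwise (deterministic) inequality behind the Bruss-Robertson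
inequality. -/
lemma knapMax_mul_le {n : ℕ} (x : Fin n → ℝ) (s t : ℝ)
    (ht : 0 < t) (hs : 0 ≤ s) :
    (knapMax x s : ℝ) * t ≤
      ((Finset.univ.filter (fun i => x i ≤ t)).card : ℝ) * t + s
        - ∑ i ∈ Finset.univ.filter (fun i => x i ≤ t), x i := by
  classical
  set B := Finset.univ.filter (fun i : Fin n => x i ≤ t) with hBdef
  have hne : (Finset.univ.powerset.filter
      (fun A : Finset (Fin n) => ∑ i ∈ A, x i ≤ s)).Nonempty := by
    refine ⟨∅, ?_⟩
    simp [hs]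
  obtain ⟨A, hAmem, hAcard⟩ := Finset.exists_mem_eq_sup _ hne Finset.card
  rw [Finset.mem_filter] at hAmem
  have hAs : ∑ i ∈ A, x i ≤ s := hAmem.2
  have hM : (knapMax x s : ℝ) = (A.card : ℝ) := by
    unfold knapMax; rw [hAcard]
  have hsplitA : ∑ i ∈ A \ B, x i + ∑ i ∈ A ∩ B, x i = ∑ i ∈ A, x i := by
    rw [show A \ B = A \ (A ∩ B) from (Finset.sdiff_inter_self_left A B).symm]
    exact Finset.sum_sdiff Finset.inter_subset_left
  have hsplitB : ∑ i ∈ B \ A, x i + ∑ i ∈ A ∩ B, x i = ∑ i ∈ B, x i := by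
    rw [show B \ A = B \ (A ∩ B) from (Finset.sdiff_inter_self_right B A).symm]
    exact Finset.sum_sdiff Finset.inter_subset_right
  have h1 : ((A \ B).card : ℝ) * t ≤ ∑ i ∈ A \ B, x i := by
    have := Finset.card_nsmul_le_sum (A \ B) x t (fun i hi => by
      have : ¬ x i ≤ t := by
        have := (Finset.mem_sdiff.1 hi).2
        simpa [hBdef] using this
      linarith [lt_of_not_ge this])
    simpa [nsmul_eq_mul] using this
  have h2 : ∑ i ∈ B \ A, x i ≤ ((B \ A).card : ℝ) * t := by
    have := Finset.sum_le_card_nsmul (B \ A) x t (fun i hi => by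
      have := (Finset.mem_sdiff.1 hi).1
      simpa [hBdef] using this)
    simpa [nsmul_eq_mul] using this
  have hc1 : ((A ∩ B).card : ℝ) + ((A \ B).card : ℝ) = (A.card : ℝ) := by
    exact_mod_cast congrArg (Nat.cast (R := ℝ)) (Finset.card_inter_add_card_sdiff A B)
  have hc2 : ((A ∩ B).card : ℝ) + ((B \ A).card : ℝ) = (B.card : ℝ) := by
    rw [Finset.inter_comm]
    exact_mod_cast congrArg (Nat.cast (R := ℝ)) (Finset.card_inter_add_card_sdiff B A)
  rw [hM]
  nlinarith [h1, h2, hc1, hc2, hsplitA, hsplitB, hAs, ht]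

/-- Bruss-Robertson inequality (common continuous marginal distribution, no
independence required). -/
theorem bruss_robertson {Ω : Type*} [MeasurableSpace Ω] (μ : Measure Ω)
    [IsProbabilityMeasure μ] (n : ℕ) (X : Fin n → Ω → ℝ)
    (hX : ∀ i, Measurable (X i)) (hpos : ∀ i ω, 0 ≤ X i ω)
    (ν : Measure ℝ) [IsProbabilityMeasure ν]
    (hlaw : ∀ i, μ.map (X i) = ν)
    (hcont : Continuous (cdf ν))
    (s t : ℝ) (hs : 0 < s) (ht : 0 < t)
    (hts : (n : ℝ) * ∫ x in Ioc (0:ℝ) t, x ∂ν = s) :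
    ∫ ω, (knapMax (fun i => X i ω) s : ℝ) ∂μ ≤ (n : ℝ) * cdf ν t := by
  classical
  rcases Nat.eq_zero_or_pos n with hn | hn
  · subst hn
    simp only [Nat.cast_zero, zero_mul] at hts
    linarith
  set i0 : Fin n := ⟨0, hn⟩
  -- ν is supported on [0, ∞)
  have hν0 : ν (Iio 0) = 0 := by
    rw [← hlaw i0, Measure.map_apply (hX i0) measurableSet_Iio]
    have : X i0 ⁻¹' Iio 0 = ∅ := by
      ext ω
      simp only [Set.mem_preimage, Set.mem_Iio, Set.mem_empty_iff_false, iff_false, not_lt]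
      exact hpos i0 ω
    rw [this, measure_empty]
  have hae0 : ∀ᵐ x ∂ν, 0 ≤ x := by
    rw [ae_iff]
    have : {x : ℝ | ¬ 0 ≤ x} = Iio 0 := by ext x; simp [not_le]
    rw [this]; exact hν0
  -- the auxiliary function h
  set h : ℝ → ℝ := fun x => if x ≤ t then 1 - x / t else 0 with hhdef
  have hmeas : Measurable h := by
    apply Measurable.ite measurableSet_Iic
    · exact measurable_const.sub (measurable_id.div_const t)
    · exact measurable_const
  have hbound : ∀ᵐ x ∂ν, ‖h x‖ ≤ 1 := by
    filter_upwards [hae0] with x hx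
    rw [Real.norm_eq_abs, hhdef]
    simp only
    split_ifs with hxt
    · have h1 : 0 ≤ x / t := div_nonneg hx ht.le
      have h2 : x / t ≤ 1 := by rw [div_le_one ht]; exact hxt
      rw [abs_le]; constructor <;> linarith
    · simp
  have hint_ν : Integrable h ν :=
    Integrable.mono' (integrable_const 1) hmeas.aestronglyMeasurable hbound
  have hint_i : ∀ i, Integrable (fun ω => h (X i ω)) μ := by
    intro i
    have h1 : Integrable h (μ.map (X i)) := by rw [hlaw i]; exact hint_ν
    exact (integrable_map_measure hmeas.aestronglyMeasurable (hX i).aemeasurable).mp h1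
  have hval : ∀ i, ∫ ω, h (X i ω) ∂μ = ∫ x, h x ∂ν := by
    intro i
    rw [← hlaw i, integral_map (hX i).aemeasurable hmeas.aestronglyMeasurable]
  -- identify ∫ h dν
  have hid_int : IntegrableOn (fun x : ℝ => x) (Iic t) ν := by
    refine Integrable.mono' (integrable_const t) measurable_id.aestronglyMeasurable ?_
    filter_upwards [ae_restrict_of_ae hae0, ae_restrict_mem measurableSet_Iic] with x hx hx2
    rw [Real.norm_eq_abs, abs_of_nonneg hx]; exact hx2
  have hIic : ∫ x, h x ∂ν = ∫ x in Iic t, (1 - x / t) ∂ν := by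
    rw [← integral_indicator measurableSet_Iic]
    congr 1
  have hsplit : ∫ x in Iic t, (1 - x / t) ∂ν
      = (ν (Iic t)).toReal - (∫ x in Iic t, x ∂ν) / t := by
    rw [integral_sub (integrable_const 1) (hid_int.div_const t), integral_const,
      integral_div]
    simp [Measure.restrict_apply_univ, Measure.real]
  have hIic_eq : ∫ x in Iic t, x ∂ν = ∫ x in Ioc 0 t, x ∂ν := by
    have hu : Iic (0:ℝ) ∪ Ioc 0 t = Iic t := Set.Iic_union_Ioc_eq_Iic ht.le
    have hz : ∫ x in Iic (0:ℝ), x ∂ν = 0 := by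
      apply integral_eq_zero_of_ae
      filter_upwards [ae_restrict_of_ae hae0, ae_restrict_mem measurableSet_Iic] with x h1 h2
      exact le_antisymm h2 h1
    calc ∫ x in Iic t, x ∂ν
        = ∫ x in Iic (0:ℝ) ∪ Ioc 0 t, x ∂ν := by rw [hu]
      _ = (∫ x in Iic (0:ℝ), x ∂ν) + ∫ x in Ioc 0 t, x ∂ν := by
          exact setIntegral_union (Set.Iic_disjoint_Ioc le_rfl) measurableSet_Ioc
            (hid_int.mono_set (Set.Iic_subset_Iic.2 ht.le))
            (hid_int.mono_set Set.Ioc_subset_Iic_self)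
      _ = ∫ x in Ioc 0 t, x ∂ν := by rw [hz, zero_add]
  have hHval : ∫ x, h x ∂ν = cdf ν t - (∫ x in Ioc 0 t, x ∂ν) / t := by
    rw [hIic, hsplit, hIic_eq, cdf_eq_real, Measure.real]
  -- the dominating function g
  set g : Ω → ℝ := fun ω => (∑ i, h (X i ω)) + s / t with hgdef
  have hg_int : Integrable g μ :=
    (integrable_finset_sum _ (fun i _ => hint_i i)).add (integrable_const _)
  -- pointwise bound
  have hpt : ∀ ω, (knapMax (fun i => X i ω) s : ℝ) ≤ g ω := by
    intro ω
    have key := knapMax_mul_le (fun i => X i ω) s t ht hs.le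
    set B := Finset.univ.filter (fun i : Fin n => X i ω ≤ t) with hBdef
    have hsumh : ∑ i, h (X i ω)
        = (B.card : ℝ) - (∑ i ∈ B, X i ω) / t := by
      have : ∑ i, h (X i ω) = ∑ i ∈ B, (1 - X i ω / t) := by
        rw [hBdef, Finset.sum_filter]
      rw [this, Finset.sum_sub_distrib, Finset.sum_const, ← Finset.sum_div,
        nsmul_eq_mul, mul_one]
    have htarget : ((B.card : ℝ) - (∑ i ∈ B, X i ω) / t + s / t) * t
        = (B.card : ℝ) * t + s - ∑ i ∈ B, X i ω := by
      field_simp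
      ring
    have hle : (knapMax (fun i => X i ω) s : ℝ) * t
        ≤ ((B.card : ℝ) - (∑ i ∈ B, X i ω) / t + s / t) * t := by
      rw [htarget]; exact key
    have := le_of_mul_le_mul_right hle ht
    rw [hgdef]; simp only; rw [hsumh]; exact this
  -- integrate
  have hmono : ∫ ω, (knapMax (fun i => X i ω) s : ℝ) ∂μ ≤ ∫ ω, g ω ∂μ := by
    refine integral_mono_of_nonneg ?_ hg_int ?_
    · exact Filter.Eventually.of_forall (fun ω => Nat.cast_nonneg _)
    · exact Filter.Eventually.of_forall hpt
  have hgval : ∫ ω, g ω ∂μ = (n : ℝ) * (cdf ν t - (∫ x in Ioc 0 t, x ∂ν) / t) + s / t := by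
    rw [hgdef]
    simp only
    rw [integral_add (integrable_finset_sum _ (fun i _ => hint_i i)) (integrable_const _),
      integral_finset_sum _ (fun i _ => hint_i i), integral_const]
    simp only [probReal_univ, one_smul]
    congr 1
    calc ∑ i : Fin n, ∫ ω, h (X i ω) ∂μ
        = ∑ i : Fin n, (cdf ν t - (∫ x in Ioc 0 t, x ∂ν) / t) := by
          refine Finset.sum_congr rfl (fun i _ => ?_)
          rw [hval i, hHval]
      _ = (n : ℝ) * (cdf ν t - (∫ x in Ioc 0 t, x ∂ν) / t) := by
          rw [Finset.sum_const, Finset.card_univ, Fintype.card_fin, nsmul_eq_mul]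
  have hfin : (n : ℝ) * ((∫ x in Ioc 0 t, x ∂ν) / t) = s / t := by
    rw [← mul_div_assoc, hts]
  calc ∫ ω, (knapMax (fun i => X i ω) s : ℝ) ∂μ
      ≤ ∫ ω, g ω ∂μ := hmono
    _ = (n : ℝ) * (cdf ν t - (∫ x in Ioc 0 t, x ∂ν) / t) + s / t := hgval
    _ = (n : ℝ) * cdf ν t := by
        rw [mul_sub, hfin]; ring
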